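/- arXiv:1706.04418 — 3 statements merged into one kernel-verified Lean document; each statement's English description precedes it below -/
import Mathlib

section
/- For every natural number n and every real number x, the spherical Bessel function satisfies |j_n(x)| ≤ |x|^n · e^{x²/2} / (2n+1)!!. -/
open Real Nat

/-- The spherical Bessel function of order `n`, defined by its everywhere absolutely convergent
power series `j_n(x) = Σ_{m=0}^∞ (−1)^m x^{2m+n} / (2^m · m! · (2n+2m+1)!!)`. -/
noncomputable def sphericalBesselJ (n : ℕ) (x : ℝ) : ℝ :=
  ∑' m : ℕ, (-1 : ℝ) ^ m * x ^ (2 * m + n) /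
    (2 ^ m * (m.factorial : ℝ) * ((2 * n + 2 * m + 1)‼ : ℝ))

lemma doubleFactorial_le_aux (n m : ℕ) : (2 * n + 1)‼ ≤ (2 * n + 2 * m + 1)‼ := by
  induction m with
  | zero => simp
  | succ k ih =>
    have h : 2 * n + 2 * (k + 1) + 1 = (2 * n + 2 * k + 1) + 2 := by ring
    rw [h, Nat.doubleFactorial_add_two]
    calc (2 * n + 1)‼ ≤ (2 * n + 2 * k + 1)‼ := ih
      _ ≤ (2 * n + 2 * k + 1 + 2) * (2 * n + 2 * k + 1)‼ :=
        Nat.le_mul_of_pos_left _ (by positivity)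

/-- For every natural number `n` and every real `x`, the spherical Bessel
function satisfies `|j_n(x)| ≤ |x|^n · e^{x²/2} / (2n+1)!!`. -/
theorem abs_sphericalBesselJ_le (n : ℕ) (x : ℝ) :
    |sphericalBesselJ n x| ≤ |x| ^ n * Real.exp (x ^ 2 / 2) / ((2 * n + 1)‼ : ℝ) := by
  have hgsum : Summable (fun m : ℕ =>
      |x| ^ n / ((2 * n + 1)‼ : ℝ) * ((x ^ 2 / 2) ^ m / m.factorial)) :=
    (Real.summable_pow_div_factorial (x ^ 2 / 2)).mul_left _
  have hkey : ∀ m : ℕ, |(-1 : ℝ) ^ m * x ^ (2 * m + n) /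
      (2 ^ m * (m.factorial : ℝ) * ((2 * n + 2 * m + 1)‼ : ℝ))| ≤
      |x| ^ n / ((2 * n + 1)‼ : ℝ) * ((x ^ 2 / 2) ^ m / m.factorial) := by
    intro m
    have h1 : |(-1 : ℝ) ^ m * x ^ (2 * m + n) /
        (2 ^ m * (m.factorial : ℝ) * ((2 * n + 2 * m + 1)‼ : ℝ))| =
        |x| ^ (2 * m + n) /
        (2 ^ m * (m.factorial : ℝ) * ((2 * n + 2 * m + 1)‼ : ℝ)) := by
      rw [abs_div, abs_mul, abs_pow, abs_pow, abs_neg, abs_one, one_pow, one_mul,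
        abs_of_pos (by positivity : (0:ℝ) < 2 ^ m * (m.factorial : ℝ) *
          ((2 * n + 2 * m + 1)‼ : ℝ))]
    rw [h1]
    have hd : ((2 * n + 1)‼ : ℝ) ≤ ((2 * n + 2 * m + 1)‼ : ℝ) :=
      Nat.cast_le.mpr (doubleFactorial_le_aux n m)
    have hC : (0:ℝ) < ((2 * n + 1)‼ : ℝ) := by positivity
    calc |x| ^ (2 * m + n) /
        (2 ^ m * (m.factorial : ℝ) * ((2 * n + 2 * m + 1)‼ : ℝ))
        ≤ |x| ^ (2 * m + n) /
          (2 ^ m * (m.factorial : ℝ) * ((2 * n + 1)‼ : ℝ)) := by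
          gcongr
      _ = |x| ^ n / ((2 * n + 1)‼ : ℝ) * ((x ^ 2 / 2) ^ m / m.factorial) := by
          have h2 : |x| ^ (2 * m + n) = |x| ^ n * (x ^ 2) ^ m := by
            rw [pow_add, pow_mul, sq_abs, mul_comm]
          rw [h2, div_pow]
          ring
  have hfsum : Summable (fun m : ℕ => |(-1 : ℝ) ^ m * x ^ (2 * m + n) /
      (2 ^ m * (m.factorial : ℝ) * ((2 * n + 2 * m + 1)‼ : ℝ))|) :=
    Summable.of_nonneg_of_le (fun m => abs_nonneg _) hkey hgsum
  calc |sphericalBesselJ n x|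
      ≤ ∑' m : ℕ, |(-1 : ℝ) ^ m * x ^ (2 * m + n) /
        (2 ^ m * (m.factorial : ℝ) * ((2 * n + 2 * m + 1)‼ : ℝ))| := by
        rw [sphericalBesselJ, ← Real.norm_eq_abs]
        exact norm_tsum_le_tsum_norm hfsum
    _ ≤ ∑' m : ℕ, |x| ^ n / ((2 * n + 1)‼ : ℝ) * ((x ^ 2 / 2) ^ m / m.factorial) :=
        Summable.tsum_le_tsum hkey hfsum hgsum
    _ = |x| ^ n * Real.exp (x ^ 2 / 2) / ((2 * n + 1)‼ : ℝ) := by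
        rw [tsum_mul_left]
        have he : ∑' m : ℕ, (x ^ 2 / 2) ^ m / (m.factorial : ℝ) = Real.exp (x ^ 2 / 2) := by
          rw [Real.exp_eq_exp_ℝ, NormedSpace.exp_eq_tsum_div]
        rw [he]; ring
end

section
/- For all k > 0, R > 0 and every ε with 0 < ε < e^{−1}, there exists N₀ ∈ ℕ (depending on ε, R, k) such that for all natural numbers n ≥ N₀ and all r ∈ (0, R], the spherical Bessel function satisfies j_n(kr) ≥ (1−ε) · e^{n+1/2} · k^n · r^n / (√2 · (2n+1)^{n+1}). -/
open Real Nat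

open Filter Stirling Topology


noncomputable def besselTerm (n : ℕ) (x : ℝ) (m : ℕ) : ℝ :=
  (-1 : ℝ) ^ m * x ^ (2 * m + n) /
    (2 ^ m * (m.factorial : ℝ) * ((2 * n + 2 * m + 1)‼ : ℝ))

noncomputable def besselAbs (n : ℕ) (x : ℝ) (m : ℕ) : ℝ :=
  x ^ (2 * m + n) / (2 ^ m * (m.factorial : ℝ) * ((2 * n + 2 * m + 1)‼ : ℝ))

lemma besselAbs_nonneg (n : ℕ) {x : ℝ} (hx : 0 ≤ x) (m : ℕ) : 0 ≤ besselAbs n x m := by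
  unfold besselAbs; positivity

lemma besselTerm_even (n : ℕ) (x : ℝ) (j : ℕ) :
    besselTerm n x (2 * j) = besselAbs n x (2 * j) := by
  unfold besselTerm besselAbs
  rw [pow_mul]; norm_num

lemma besselTerm_odd (n : ℕ) (x : ℝ) (j : ℕ) :
    besselTerm n x (2 * j + 1) = - besselAbs n x (2 * j + 1) := by
  unfold besselTerm besselAbs
  rw [pow_succ, pow_mul]
  norm_num [neg_div]

lemma besselTerm_summable (n : ℕ) (x : ℝ) : Summable (besselTerm n x) := by
  apply Summable.of_norm_bounded (g := fun m => |x| ^ n * ((x ^ 2 / 2) ^ m / (m.factorial : ℝ)))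
  · exact (Real.summable_pow_div_factorial (x ^ 2 / 2)).mul_left _
  · intro m
    unfold besselTerm
    rw [norm_div, norm_mul, norm_pow, norm_neg, norm_one, one_pow, one_mul]
    have h1 : ‖x ^ (2 * m + n)‖ = |x| ^ (2*m+n) := by rw [norm_pow]; rfl
    rw [h1]
    have hD : (1 : ℝ) ≤ ((2 * n + 2 * m + 1)‼ : ℝ) := by
      exact_mod_cast Nat.one_le_iff_ne_zero.2 (Nat.doubleFactorial_pos _).ne'
    have hden : ‖(2:ℝ) ^ m * (m.factorial : ℝ) * ((2 * n + 2 * m + 1)‼ : ℝ)‖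
        = 2 ^ m * (m.factorial : ℝ) * ((2 * n + 2 * m + 1)‼ : ℝ) := by
      rw [Real.norm_eq_abs, abs_of_pos]; positivity
    rw [hden]
    have : |x| ^ (2*m+n) = |x|^n * (|x|^2)^m := by
      rw [pow_add, pow_mul, mul_comm]
    rw [this, sq_abs]
    rw [div_pow, mul_div_assoc, div_div]
    apply mul_le_mul_of_nonneg_left _ (by positivity)
    rw [div_le_div_iff₀ (by positivity) (by positivity)]
    apply mul_le_mul_of_nonneg_left _ (by positivity)
    exact le_mul_of_one_le_right (by positivity) hD



lemma besselAbs_succ (n : ℕ) (x : ℝ) (m : ℕ) :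
    besselAbs n x (m + 1) =
      besselAbs n x m * x ^ 2 / (2 * ((m : ℝ) + 1) * (2 * n + 2 * m + 3)) := by
  unfold besselAbs
  have h1 : 2 * (m + 1) + n = 2 * m + n + 2 := by ring
  have h2 : 2 * n + 2 * (m + 1) + 1 = (2 * n + 2 * m + 1) + 2 := by ring
  rw [h1, h2, Nat.doubleFactorial_add_two, Nat.factorial_succ, pow_add, pow_succ]
  rw [div_mul_eq_mul_div, div_div]
  congr 1 <;> push_cast <;> ring

lemma besselAbs_antitone (n : ℕ) {x : ℝ} (hx : 0 ≤ x) (h2 : x ^ 2 ≤ 2 * (2 * n + 3)) (m : ℕ) :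
    besselAbs n x (m + 1) ≤ besselAbs n x m := by
  rw [besselAbs_succ]
  rw [div_le_iff₀ (by positivity)]
  have ha : 0 ≤ besselAbs n x m := by unfold besselAbs; positivity
  have h3 : x ^ 2 ≤ 2 * ((m : ℝ) + 1) * (2 * n + 2 * m + 3) := by
    calc x ^ 2 ≤ 2 * (2 * (n:ℝ) + 3) := h2
      _ ≤ 2 * ((m : ℝ) + 1) * (2 * n + 2 * m + 3) := by nlinarith [Nat.cast_nonneg (α := ℝ) m, Nat.cast_nonneg (α := ℝ) n]
  nlinarith


noncomputable def besselC (n : ℕ) : ℝ :=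
  ((2 * n + 1)‼ : ℝ) * Real.exp ((n : ℝ) + 1 / 2) / (Real.sqrt 2 * (2 * (n : ℝ) + 1) ^ (n + 1))

lemma doubleFactorial_cast_eq (n : ℕ) :
    ((2 * n + 1)‼ : ℝ) = (2 * n + 1)! / (2 ^ n * n !) := by
  have h := Nat.factorial_eq_mul_doubleFactorial (2 * n)
  rw [Nat.doubleFactorial_two_mul] at h
  have h2 : ((2 * n + 1)! : ℝ) = ((2 * n + 1)‼ : ℝ) * (2 ^ n * n !) := by exact_mod_cast congrArg (Nat.cast (R := ℝ)) h
  rw [h2]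
  field_simp

lemma besselC_key (n : ℕ) (hn : 1 ≤ n) :
    besselC n * Real.exp (1 / 2) =
      (stirlingSeq (2 * n + 1) / stirlingSeq n) *
        Real.sqrt ((2 * (n : ℝ) + 1) / (2 * (n : ℝ))) * ((2 * (n : ℝ) + 1) / (2 * (n : ℝ))) ^ n := by
  have hN : (0 : ℝ) < n := by exact_mod_cast hn
  unfold besselC stirlingSeq
  rw [doubleFactorial_cast_eq]
  push_cast
  rw [Real.sqrt_mul (by norm_num : (0:ℝ) ≤ 2) ((2 * (n:ℝ) + 1)),
      Real.sqrt_mul (by norm_num : (0:ℝ) ≤ 2) ((n:ℝ)),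
      Real.sqrt_div (by positivity : (0:ℝ) ≤ 2 * (n:ℝ) + 1),
      Real.sqrt_mul (by norm_num : (0:ℝ) ≤ 2) ((n:ℝ))]
  have hu2 : Real.exp 1 = Real.exp (1/2) * Real.exp (1/2) := by
    rw [← Real.exp_add]; norm_num
  have hA : Real.exp ((n : ℝ) + 1 / 2) = (Real.exp (1/2) * Real.exp (1/2)) ^ n * Real.exp (1/2) := by
    rw [← hu2, Real.exp_add, ← Real.exp_one_rpow ((n:ℝ)), Real.rpow_natCast]
  have h2n1 : 2 * n + 1 = n + n + 1 := by omega
  rw [h2n1, hA, hu2]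
  have hs2 : Real.sqrt 2 ≠ 0 := by positivity
  have hsn : Real.sqrt (n:ℝ) ≠ 0 := by positivity
  have hs2n1 : Real.sqrt (2*(n:ℝ)+1) ≠ 0 := by positivity
  have hfac : ((n)! : ℝ) ≠ 0 := by positivity
  have hfac2 : (((n+n+1))! : ℝ) ≠ 0 := by positivity
  have he : Real.exp 1 ≠ 0 := Real.exp_ne_zero 1
  have hNne : (n:ℝ) ≠ 0 := hN.ne'
  have h2N1 : (2*(n:ℝ)+1) ≠ 0 := by positivity
  have hu : Real.exp (1/2) ≠ 0 := Real.exp_ne_zero _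
  simp only [div_eq_mul_inv, mul_inv, inv_inv, mul_pow, inv_pow]
  field_simp
  ring

lemma besselC_tendsto : Tendsto besselC atTop (𝓝 1) := by
  have h2n : Tendsto (fun n : ℕ => 2 * n + 1) atTop atTop :=
    tendsto_atTop_atTop.mpr fun b => ⟨b, fun a ha => by omega⟩
  have hs : Tendsto (fun n : ℕ => stirlingSeq (2 * n + 1)) atTop (𝓝 (Real.sqrt π)) :=
    tendsto_stirlingSeq_sqrt_pi.comp h2n
  have hpi : Real.sqrt π ≠ 0 := (Real.sqrt_pos.mpr pi_pos).ne'
  have hdiv : Tendsto (fun n : ℕ => stirlingSeq (2 * n + 1) / stirlingSeq n) atTop (𝓝 1) := by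
    have := hs.div tendsto_stirlingSeq_sqrt_pi hpi
    rw [div_self hpi] at this
    exact this
  have hratio : Tendsto (fun n : ℕ => (2 * (n : ℝ) + 1) / (2 * n)) atTop (𝓝 1) := by
    have h0 : Tendsto (fun n : ℕ => 1 + (1/2) / (n:ℝ)) atTop (𝓝 1) := by
      have := tendsto_const_div_atTop_nhds_zero_nat (1/2 : ℝ)
      simpa using (tendsto_const_nhds (x := (1:ℝ))).add this
    refine h0.congr' ?_
    filter_upwards [eventually_ge_atTop 1] with n hn
    have hN : (0:ℝ) < n := by exact_mod_cast hn
    field_simp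
  have hsqrt : Tendsto (fun n : ℕ => Real.sqrt ((2 * (n : ℝ) + 1) / (2 * n))) atTop (𝓝 1) := by
    simpa only [Real.sqrt_one] using hratio.sqrt
  have hpow : Tendsto (fun n : ℕ => ((2 * (n : ℝ) + 1) / (2 * n)) ^ n) atTop
      (𝓝 (Real.exp (1/2))) := by
    refine (Real.tendsto_one_add_div_pow_exp (1/2)).congr' ?_
    filter_upwards [eventually_ge_atTop 1] with n hn
    have hN : (0:ℝ) < n := by exact_mod_cast hn
    congr 1
    field_simp
  have htot : Tendsto (fun n : ℕ =>
      (stirlingSeq (2 * n + 1) / stirlingSeq n) *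
        Real.sqrt ((2 * (n : ℝ) + 1) / (2 * n)) * ((2 * (n : ℝ) + 1) / (2 * n)) ^ n *
        (Real.exp (1/2))⁻¹) atTop (𝓝 1) := by
    have := ((hdiv.mul hsqrt).mul hpow).mul (tendsto_const_nhds (x := (Real.exp (1/2))⁻¹))
    simpa [mul_inv_cancel₀ (Real.exp_ne_zero (1/2:ℝ))] using this
  refine htot.congr' ?_
  filter_upwards [eventually_ge_atTop 1] with n hn
  rw [← besselC_key n hn, mul_inv_cancel_right₀ (Real.exp_ne_zero _)]


lemma sphericalBesselJ_ge (n : ℕ) {x : ℝ} (hx : 0 ≤ x) (h2 : x ^ 2 ≤ 2 * (2 * (n:ℝ) + 3)) :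
    x ^ n / ((2 * n + 1)‼ : ℝ) * (1 - x ^ 2 / (2 * (2 * (n:ℝ) + 3))) ≤ sphericalBesselJ n x := by
  have hs := besselTerm_summable n x
  have he : Summable (fun j => besselTerm n x (2 * j)) :=
    hs.comp_injective (fun a b h => by omega)
  have ho : Summable (fun j => besselTerm n x (2 * j + 1)) :=
    hs.comp_injective (fun a b h => by omega)
  have hJ : sphericalBesselJ n x = ∑' j : ℕ, (besselTerm n x (2 * j) + besselTerm n x (2 * j + 1)) := by
    rw [Summable.tsum_add he ho, tsum_even_add_odd he ho]; rfl
  have hpair : ∀ j : ℕ, 0 ≤ besselTerm n x (2 * j) + besselTerm n x (2 * j + 1) := by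
    intro j
    rw [besselTerm_even, besselTerm_odd]
    have := besselAbs_antitone n hx h2 (2 * j)
    linarith
  have hle : besselTerm n x (2 * 0) + besselTerm n x (2 * 0 + 1) ≤ sphericalBesselJ n x := by
    rw [hJ]
    exact Summable.le_tsum (he.add ho) 0 (fun j _ => hpair j)
  refine le_trans (le_of_eq ?_) hle
  rw [besselTerm_even, besselTerm_odd]
  have h01 : besselAbs n x (0 + 1) =
      besselAbs n x 0 * x ^ 2 / (2 * (((0:ℕ) : ℝ) + 1) * (2 * n + 2 * ((0:ℕ):ℝ) + 3)) := besselAbs_succ n x 0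
  have h0 : besselAbs n x 0 = x ^ n / ((2 * n + 1)‼ : ℝ) := by
    unfold besselAbs
    norm_num
  rw [show (2 : ℕ) * 0 = 0 from rfl, show (2 : ℕ) * 0 + 1 = 0 + 1 from rfl, h01, h0]
  have hd : (0:ℝ) < 2 * (2 * (n:ℝ) + 3) := by positivity
  field_simp
  ring

/-- For all `k > 0`, `R > 0` and every `ε` with `0 < ε < e⁻¹`, there exists
`N₀ ∈ ℕ` (depending on `ε, R, k`) such that for all natural numbers `n ≥ N₀` and all
`r ∈ (0, R]`, the spherical Bessel function satisfies
`j_n(kr) ≥ (1−ε) · e^{n+1/2} · k^n · r^n / (√2 · (2n+1)^{n+1})`. -/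
theorem sphericalBesselJ_lower_bound (k R ε : ℝ) (hk : 0 < k) (hR : 0 < R)
    (hε : 0 < ε) (hε' : ε < (Real.exp 1)⁻¹) :
    ∃ N₀ : ℕ, ∀ n : ℕ, N₀ ≤ n → ∀ r ∈ Set.Ioc (0 : ℝ) R,
      (1 - ε) * Real.exp ((n : ℝ) + 1 / 2) * k ^ n * r ^ n /
          (Real.sqrt 2 * (2 * (n : ℝ) + 1) ^ (n + 1)) ≤
        sphericalBesselJ n (k * r) := by
  have hd : Tendsto (fun n : ℕ => 2 * (2 * (n : ℝ) + 3)) atTop atTop := by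
    apply tendsto_atTop_mono (fun n : ℕ => ?_) tendsto_natCast_atTop_atTop
    nlinarith [Nat.cast_nonneg (α := ℝ) n]
  have h0 : Tendsto (fun n : ℕ => (k * R) ^ 2 / (2 * (2 * (n : ℝ) + 3))) atTop (𝓝 0) := by
    simp only [div_eq_mul_inv]
    simpa using (hd.inv_tendsto_atTop).const_mul ((k * R) ^ 2)
  have h1 : Tendsto (fun n : ℕ => (1 - ε) * besselC n + (k * R) ^ 2 / (2 * (2 * (n : ℝ) + 3)))
      atTop (𝓝 (1 - ε)) := by
    have := (besselC_tendsto.const_mul (1 - ε)).add h0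
    simpa using this
  have hev1 : ∀ᶠ n : ℕ in atTop,
      (1 - ε) * besselC n + (k * R) ^ 2 / (2 * (2 * (n : ℝ) + 3)) < 1 :=
    h1.eventually_lt_const (by linarith)
  have hev2 : ∀ᶠ n : ℕ in atTop, (k * R) ^ 2 ≤ 2 * (2 * (n : ℝ) + 3) :=
    hd.eventually_ge_atTop _
  obtain ⟨N₀, hN₀⟩ := eventually_atTop.mp (hev1.and hev2)
  refine ⟨N₀, fun n hn r hr => ?_⟩
  obtain ⟨hc1, hc2⟩ := hN₀ n hn
  set x : ℝ := k * r with hxdef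
  have hx : 0 < x := mul_pos hk hr.1
  have hxR : x ≤ k * R := mul_le_mul_of_nonneg_left hr.2 hk.le
  have hx2 : x ^ 2 ≤ 2 * (2 * (n : ℝ) + 3) :=
    le_trans (by nlinarith) hc2
  have hge := sphericalBesselJ_ge n hx.le hx2
  have hD : (0:ℝ) < ((2 * n + 1)‼ : ℝ) := by positivity
  have hden : (0:ℝ) < 2 * (2 * (n:ℝ) + 3) := by positivity
  have key1 : (1 - ε) * Real.exp ((n : ℝ) + 1 / 2) * k ^ n * r ^ n /
      (Real.sqrt 2 * (2 * (n : ℝ) + 1) ^ (n + 1)) =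
      ((1 - ε) * besselC n) * (x ^ n / ((2 * n + 1)‼ : ℝ)) := by
    unfold besselC
    rw [hxdef, mul_pow]
    have hs2 : Real.sqrt 2 ≠ 0 := by positivity
    have hp : ((2 * (n:ℝ) + 1) ^ (n + 1)) ≠ 0 := by positivity
    field_simp
  have key2 : ((1 - ε) * besselC n) ≤ 1 - x ^ 2 / (2 * (2 * (n:ℝ) + 3)) := by
    have hxkR : x ^ 2 / (2 * (2 * (n:ℝ) + 3)) ≤ (k*R) ^ 2 / (2 * (2 * (n:ℝ) + 3)) := by
      exact (div_le_div_iff_of_pos_right hden).mpr (by nlinarith)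
    linarith
  rw [key1]
  refine le_trans ?_ hge
  rw [mul_comm (x ^ n / ((2 * n + 1)‼ : ℝ)) _]
  exact mul_le_mul_of_nonneg_right key2 (by positivity)
end

section
/- Let l ∈ {2, 3}, k > 0, R > 0 and 0 < ε < e^{−1}. Then there exists N₀ ∈ ℕ (depending on ε, R, k) such that for all natural numbers n ≥ N₀, ∫_0^R r^{l−1} · j_n(kr)² dr ≥ (1−ε)² · e^{2n+1} · k^{2n} · R^{2n+l} / (2 · (2n+1)^{2n+2} · (2n+l)). -/
open Real Nat

open Filter Topology

noncomputable def sbTerm (n : ℕ) (x : ℝ) (m : ℕ) : ℝ :=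
  (-1 : ℝ) ^ m * x ^ (2 * m + n) / (2 ^ m * (m.factorial : ℝ) * ((2 * n + 2 * m + 1)‼ : ℝ))

lemma sbTerm_abs_le (n : ℕ) (x : ℝ) (m : ℕ) :
    |sbTerm n x m| ≤ |x| ^ n * ((x ^ 2 / 2) ^ m / (m.factorial : ℝ)) := by
  have h2 : (0 : ℝ) < 2 ^ m * (m.factorial : ℝ) := by positivity
  have key : |sbTerm n x m| ≤ |x| ^ (2 * m + n) / (2 ^ m * (m.factorial : ℝ)) := by
    rw [sbTerm, abs_div, abs_mul, abs_pow, abs_neg, abs_one, one_pow, one_mul, abs_pow]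
    rw [div_le_div_iff₀ (by positivity) h2]
    have habs : |(2 : ℝ) ^ m * (m.factorial : ℝ) * ((2 * n + 2 * m + 1)‼ : ℝ)|
        = 2 ^ m * (m.factorial : ℝ) * ((2 * n + 2 * m + 1)‼ : ℝ) := by
      rw [abs_of_nonneg]; positivity
    have hd : (1 : ℝ) ≤ ((2 * n + 2 * m + 1)‼ : ℝ) := by
      exact_mod_cast Nat.one_le_iff_ne_zero.2 (Nat.doubleFactorial_pos _).ne'
    rw [habs]
    calc |x| ^ (2 * m + n) * (2 ^ m * (m.factorial : ℝ))
        ≤ |x| ^ (2 * m + n) * (2 ^ m * (m.factorial : ℝ) * ((2 * n + 2 * m + 1)‼ : ℝ)) := by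
          apply mul_le_mul_of_nonneg_left _ (by positivity)
          nlinarith [h2]
      _ = _ := by ring
  calc |sbTerm n x m| ≤ |x| ^ (2 * m + n) / (2 ^ m * (m.factorial : ℝ)) := key
    _ = |x| ^ n * ((x ^ 2 / 2) ^ m / (m.factorial : ℝ)) := by
        rw [pow_add, pow_mul, sq_abs, div_pow]
        ring

lemma sbTerm_summable (n : ℕ) (x : ℝ) : Summable (sbTerm n x) := by
  have hu : Summable (fun m : ℕ => |x| ^ n * ((x ^ 2 / 2) ^ m / (m.factorial : ℝ))) :=
    (Real.summable_pow_div_factorial (x ^ 2 / 2)).mul_left _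
  apply Summable.of_norm
  exact Summable.of_nonneg_of_le (fun m => norm_nonneg _)
    (fun m => sbTerm_abs_le n x m) hu

lemma dfac_growth (n m : ℕ) : (2 * n + 1)‼ * (2 * n + 3) ^ m ≤ (2 * n + 2 * m + 1)‼ := by
  induction m with
  | zero => simp
  | succ m ih =>
    have h : 2 * n + 2 * (m + 1) + 1 = (2 * n + 2 * m + 1) + 2 := by ring
    rw [h, Nat.doubleFactorial_add_two, pow_succ]
    calc (2 * n + 1)‼ * ((2 * n + 3) ^ m * (2 * n + 3))
        = ((2 * n + 1)‼ * (2 * n + 3) ^ m) * (2 * n + 3) := by ring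
      _ ≤ (2 * n + 2 * m + 1)‼ * (2 * n + 2 * m + 1 + 2) :=
          Nat.mul_le_mul ih (by omega)
      _ = (2 * n + 2 * m + 1 + 2) * (2 * n + 2 * m + 1)‼ := by ring

lemma sb_lower (n : ℕ) (x : ℝ) (hx : 0 ≤ x)
    (hy : x ^ 2 / (2 * (2 * (n : ℝ) + 3)) ≤ 1 / 2) :
    x ^ n / ((2 * n + 1)‼ : ℝ) * (1 - 2 * (x ^ 2 / (2 * (2 * (n : ℝ) + 3))))
      ≤ ∑' m, sbTerm n x m := by
  set y : ℝ := x ^ 2 / (2 * (2 * (n : ℝ) + 3)) with hy_def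
  have hy0 : 0 ≤ y := by positivity
  have hd : (0 : ℝ) < ((2 * n + 1)‼ : ℝ) := by exact_mod_cast Nat.doubleFactorial_pos _
  have h0 : sbTerm n x 0 = x ^ n / ((2 * n + 1)‼ : ℝ) := by
    simp [sbTerm]
  have hsplit : ∑' m, sbTerm n x m = sbTerm n x 0 + ∑' m, sbTerm n x (m + 1) :=
    Summable.tsum_eq_zero_add (sbTerm_summable n x)
  have hterm : ∀ m : ℕ, |sbTerm n x (m + 1)| ≤ x ^ n / ((2 * n + 1)‼ : ℝ) * y ^ (m + 1) := by
    intro m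
    have hxabs : |x| = x := abs_of_nonneg hx
    have hfac1 : (1 : ℝ) ≤ ((m + 1).factorial : ℝ) := by
      exact_mod_cast Nat.one_le_iff_ne_zero.2 (Nat.factorial_pos _).ne'
    have hgrow : ((2 * n + 1)‼ : ℝ) * (2 * (n : ℝ) + 3) ^ (m + 1)
        ≤ ((2 * n + 2 * (m + 1) + 1)‼ : ℝ) := by
      exact_mod_cast dfac_growth n (m + 1)
    have hdd : (0 : ℝ) < ((2 * n + 2 * (m + 1) + 1)‼ : ℝ) := by
      exact_mod_cast Nat.doubleFactorial_pos _
    have h23 : (0 : ℝ) < 2 * (n : ℝ) + 3 := by positivity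
    rw [sbTerm, abs_div, abs_mul, abs_pow, abs_neg, abs_one, one_pow, one_mul, abs_pow, hxabs]
    rw [abs_of_nonneg (by positivity : (0:ℝ) ≤ 2 ^ (m+1) * ((m+1).factorial : ℝ) * ((2 * n + 2 * (m+1) + 1)‼ : ℝ))]
    have hxp : x ^ (2 * (m + 1) + n) = (x ^ 2) ^ (m + 1) * x ^ n := by
      rw [pow_add, pow_mul]
    have hyp : x ^ n / ((2 * n + 1)‼ : ℝ) * y ^ (m + 1)
        = x ^ (2 * (m + 1) + n) / (2 ^ (m + 1) * ((2 * n + 1)‼ : ℝ) * (2 * (n : ℝ) + 3) ^ (m + 1)) := by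
      rw [hy_def, div_pow, mul_pow, hxp]
      field_simp
    rw [hyp]
    apply div_le_div_of_nonneg_left (by positivity) (by positivity)
    calc (2:ℝ) ^ (m + 1) * ((2 * n + 1)‼ : ℝ) * (2 * (n : ℝ) + 3) ^ (m + 1)
        = 2 ^ (m + 1) * (((2 * n + 1)‼ : ℝ) * (2 * (n : ℝ) + 3) ^ (m + 1)) := by ring
      _ ≤ 2 ^ (m + 1) * ((2 * n + 2 * (m + 1) + 1)‼ : ℝ) :=
          mul_le_mul_of_nonneg_left hgrow (by positivity)
      _ ≤ 2 ^ (m + 1) * ((m + 1).factorial : ℝ) * ((2 * n + 2 * (m + 1) + 1)‼ : ℝ) := by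
          apply mul_le_mul_of_nonneg_right _ hdd.le
          exact le_mul_of_one_le_right (by positivity) hfac1
  have hylt : y < 1 := lt_of_le_of_lt hy (by norm_num)
  have hgeo : Summable (fun m : ℕ => x ^ n / ((2 * n + 1)‼ : ℝ) * y ^ (m + 1)) := by
    apply Summable.mul_left
    exact ((summable_geometric_of_lt_one hy0 hylt).mul_right y).congr (fun m => by rw [pow_succ])
  have hsumgeo : (∑' m : ℕ, x ^ n / ((2 * n + 1)‼ : ℝ) * y ^ (m + 1))
      = x ^ n / ((2 * n + 1)‼ : ℝ) * (y * (1 - y)⁻¹) := by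
    rw [tsum_mul_left]
    congr 1
    calc (∑' m : ℕ, y ^ (m + 1)) = ∑' m : ℕ, y ^ m * y := by
          apply tsum_congr; intro m; rw [pow_succ]
      _ = (1 - y)⁻¹ * y := by rw [tsum_mul_right, tsum_geometric_of_lt_one hy0 hylt]
      _ = y * (1 - y)⁻¹ := by ring
  have hs : Summable (fun m => sbTerm n x (m + 1)) :=
    (summable_nat_add_iff 1).2 (sbTerm_summable n x)
  have htail : |∑' m, sbTerm n x (m + 1)| ≤ x ^ n / ((2 * n + 1)‼ : ℝ) * (y * (1 - y)⁻¹) := by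
    calc |∑' m, sbTerm n x (m + 1)| = ‖∑' m, sbTerm n x (m + 1)‖ := (Real.norm_eq_abs _).symm
      _ ≤ ∑' m, ‖sbTerm n x (m + 1)‖ := norm_tsum_le_tsum_norm hs.norm
      _ ≤ ∑' m : ℕ, x ^ n / ((2 * n + 1)‼ : ℝ) * y ^ (m + 1) :=
          Summable.tsum_le_tsum (fun m => by simpa [Real.norm_eq_abs] using hterm m) hs.norm hgeo
      _ = _ := hsumgeo
  have hinv : (1 - y)⁻¹ ≤ 2 := by
    rw [inv_le_comm₀ (by linarith) (by norm_num)]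
    linarith
  have htail2 : x ^ n / ((2 * n + 1)‼ : ℝ) * (y * (1 - y)⁻¹)
      ≤ x ^ n / ((2 * n + 1)‼ : ℝ) * (2 * y) := by
    apply mul_le_mul_of_nonneg_left _ (by positivity)
    calc y * (1 - y)⁻¹ ≤ y * 2 := mul_le_mul_of_nonneg_left hinv hy0
      _ = 2 * y := by ring
  have hlow : -(x ^ n / ((2 * n + 1)‼ : ℝ) * (2 * y)) ≤ ∑' m, sbTerm n x (m + 1) := by
    have := neg_abs_le (∑' m, sbTerm n x (m + 1))
    linarith
  rw [hsplit, h0]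
  have hfin : x ^ n / ((2 * n + 1)‼ : ℝ) * (1 - 2 * y)
      = x ^ n / ((2 * n + 1)‼ : ℝ) + -(x ^ n / ((2 * n + 1)‼ : ℝ) * (2 * y)) := by ring
  rw [hfin]
  exact add_le_add (le_refl _) hlow

noncomputable def sbQ (n : ℕ) : ℝ :=
  ((2 * n + 1)‼ : ℝ) ^ 2 * Real.exp (2 * (n : ℝ) + 1) / (2 * (2 * (n : ℝ) + 1) ^ (2 * n + 2))

lemma dfac_cast (n : ℕ) : ((2 * n + 1)‼ : ℝ) * (2 ^ n * (n.factorial : ℝ)) = ((2 * n + 1).factorial : ℝ) := by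
  have h1 : (2 * n + 1).factorial = (2 * n + 1)‼ * (2 * n)‼ := Nat.factorial_eq_mul_doubleFactorial (2 * n)
  have h2 : (2 * n)‼ = 2 ^ n * n.factorial := Nat.doubleFactorial_two_mul n
  rw [h2] at h1
  exact_mod_cast h1.symm

lemma sbQ_eq (n : ℕ) (hn : 1 ≤ n) :
    sbQ n = (Stirling.stirlingSeq (2 * n + 1) / Stirling.stirlingSeq n) ^ 2
      * (1 + 1 / (2 * (n : ℝ))) * ((1 + 1 / (2 * (n : ℝ))) ^ (2 * n)) * (Real.exp 1)⁻¹ := by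
  have hn0 : (0 : ℝ) < n := by exact_mod_cast hn
  have hfac : (0 : ℝ) < (n.factorial : ℝ) := by exact_mod_cast n.factorial_pos
  have hfac2 : (0 : ℝ) < ((2 * n + 1).factorial : ℝ) := by exact_mod_cast (2 * n + 1).factorial_pos
  have hdf : ((2 * n + 1)‼ : ℝ) = ((2 * n + 1).factorial : ℝ) / (2 ^ n * (n.factorial : ℝ)) := by
    rw [eq_div_iff (by positivity)]; exact dfac_cast n
  have hexp : Real.exp (2 * (n : ℝ) + 1) = Real.exp 1 ^ (2 * n + 1) := by
    rw [← Real.exp_nat_mul]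
    push_cast
    ring_nf
  have hone : (1 : ℝ) + 1 / (2 * (n : ℝ)) = (2 * (n : ℝ) + 1) / (2 * (n : ℝ)) := by
    field_simp
  rw [sbQ, hdf, hexp, hone]
  obtain ⟨E, hE⟩ : ∃ E, Real.exp 1 = E := ⟨_, rfl⟩
  have he : (0 : ℝ) < E := hE ▸ Real.exp_pos 1
  rw [hE]
  have hs1 : (n.factorial : ℝ) ^ 2 = Stirling.stirlingSeq n ^ 2 * (2 * n) * ((n : ℝ) ^ n / E ^ n) ^ 2 := by
    rw [Stirling.stirlingSeq, hE, div_pow, mul_pow, Real.sq_sqrt (by positivity), div_pow, div_pow]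
    field_simp
  have hs2 : ((2 * n + 1).factorial : ℝ) ^ 2 = Stirling.stirlingSeq (2 * n + 1) ^ 2
      * (2 * (2 * (n : ℝ) + 1)) * ((2 * (n : ℝ) + 1) ^ (2 * n + 1) / E ^ (2 * n + 1)) ^ 2 := by
    rw [Stirling.stirlingSeq, hE, div_pow, mul_pow, Real.sq_sqrt (by positivity), div_pow, div_pow]
    push_cast
    field_simp
  have hs0ne : Stirling.stirlingSeq n ≠ 0 := by
    obtain ⟨m, rfl⟩ := Nat.exists_eq_add_of_le hn
    have := Stirling.stirlingSeq'_pos m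
    simpa [Nat.add_comm] using this.ne'
  have hs1' : Stirling.stirlingSeq n ^ 2
      = (n.factorial : ℝ) ^ 2 / ((2 * n) * ((n : ℝ) ^ n / E ^ n) ^ 2) := by
    rw [eq_div_iff (by positivity), hs1]; ring
  have hs2' : Stirling.stirlingSeq (2 * n + 1) ^ 2
      = ((2 * n + 1).factorial : ℝ) ^ 2
        / ((2 * (2 * (n : ℝ) + 1)) * ((2 * (n : ℝ) + 1) ^ (2 * n + 1) / E ^ (2 * n + 1)) ^ 2) := by
    rw [eq_div_iff (by positivity), hs2]; ring
  rw [div_pow (Stirling.stirlingSeq (2 * n + 1)) (Stirling.stirlingSeq n) 2, hs1', hs2',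
    div_pow ((2 * (n : ℝ) + 1)) (2 * (n : ℝ)) (2 * n)]
  field_simp
  ring

lemma sbQ_tendsto : Tendsto sbQ atTop (𝓝 1) := by
  have hsp : Real.sqrt Real.pi ≠ 0 := by positivity
  have h2n1 : Tendsto (fun n : ℕ => 2 * n + 1) atTop atTop :=
    tendsto_atTop_mono (fun n => by simp only [id_eq]; omega) tendsto_id
  have h2n : Tendsto (fun n : ℕ => 2 * n) atTop atTop :=
    tendsto_atTop_mono (fun n => by simp only [id_eq]; omega) tendsto_id
  have f1 : Tendsto (fun n : ℕ => Stirling.stirlingSeq (2 * n + 1)) atTop (𝓝 (Real.sqrt Real.pi)) :=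
    Stirling.tendsto_stirlingSeq_sqrt_pi.comp h2n1
  have hdiv : Tendsto (fun n : ℕ => Stirling.stirlingSeq (2 * n + 1) / Stirling.stirlingSeq n)
      atTop (𝓝 1) := by
    have := f1.div Stirling.tendsto_stirlingSeq_sqrt_pi hsp
    rw [div_self hsp] at this; exact this
  have hpow2 : Tendsto (fun n : ℕ => (Stirling.stirlingSeq (2 * n + 1) / Stirling.stirlingSeq n) ^ 2)
      atTop (𝓝 1) := by
    simpa using hdiv.pow 2
  have hinv : Tendsto (fun n : ℕ => 1 / (2 * (n : ℝ))) atTop (𝓝 0) := by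
    have h : Tendsto (fun n : ℕ => 2 * (n : ℝ)) atTop atTop :=
      (tendsto_natCast_atTop_atTop).const_mul_atTop (by norm_num)
    have h2 := h.inv_tendsto_atTop
    apply h2.congr
    intro n
    simp [one_div]
  have f2 : Tendsto (fun n : ℕ => 1 + 1 / (2 * (n : ℝ))) atTop (𝓝 1) := by
    simpa using (tendsto_const_nhds (x := (1:ℝ)) (f := atTop)).add hinv
  have f3 : Tendsto (fun n : ℕ => (1 + 1 / (2 * (n : ℝ))) ^ (2 * n)) atTop (𝓝 (Real.exp 1)) := by
    have := (Real.tendsto_one_add_div_pow_exp 1).comp h2n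
    apply this.congr
    intro n
    push_cast
    norm_num
  have hprod : Tendsto (fun n : ℕ =>
      (Stirling.stirlingSeq (2 * n + 1) / Stirling.stirlingSeq n) ^ 2
        * (1 + 1 / (2 * (n : ℝ))) * ((1 + 1 / (2 * (n : ℝ))) ^ (2 * n)) * (Real.exp 1)⁻¹)
      atTop (𝓝 (1 * 1 * Real.exp 1 * (Real.exp 1)⁻¹)) :=
    ((hpow2.mul f2).mul f3).mul tendsto_const_nhds
  have hone : (1 : ℝ) * 1 * Real.exp 1 * (Real.exp 1)⁻¹ = 1 := by
    field_simp
  rw [hone] at hprod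
  apply hprod.congr'
  filter_upwards [eventually_ge_atTop 1] with n hn
  exact (sbQ_eq n hn).symm

lemma sbTerm_continuous (n m : ℕ) (k : ℝ) : Continuous (fun r : ℝ => sbTerm n (k * r) m) := by
  unfold sbTerm
  fun_prop

lemma sb_contOn (n : ℕ) (k R : ℝ) (hk : 0 < k) (hR : 0 < R) :
    ContinuousOn (fun r => ∑' m, sbTerm n (k * r) m) (Set.Icc (0:ℝ) R) := by
  set M := k * R with hM
  have hM0 : 0 < M := by positivity
  refine continuousOn_tsum (f := fun (m : ℕ) (r : ℝ) => sbTerm n (k * r) m)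
    (u := fun m => M ^ n * ((M ^ 2 / 2) ^ m / (m.factorial : ℝ)))
    (fun m => (sbTerm_continuous n m k).continuousOn)
    ((Real.summable_pow_div_factorial (M ^ 2 / 2)).mul_left (M ^ n)) ?_
  intro m r hr
  obtain ⟨hr0, hrR⟩ := hr
  have hkr : 0 ≤ k * r := by positivity
  have hkrM : k * r ≤ M := by
    rw [hM]; exact mul_le_mul_of_nonneg_left hrR hk.le
  have habs : |k * r| ≤ M := by rw [abs_of_nonneg hkr]; exact hkrM
  have hsq : (k * r) ^ 2 ≤ M ^ 2 := pow_le_pow_left₀ hkr hkrM 2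
  calc ‖sbTerm n (k * r) m‖ = |sbTerm n (k * r) m| := Real.norm_eq_abs _
    _ ≤ |k * r| ^ n * (((k * r) ^ 2 / 2) ^ m / (m.factorial : ℝ)) := sbTerm_abs_le n (k * r) m
    _ ≤ M ^ n * ((M ^ 2 / 2) ^ m / (m.factorial : ℝ)) := by
        gcongr <;> first | positivity | assumption

lemma sphericalBesselJ_eq_tsum (n : ℕ) (x : ℝ) :
    sphericalBesselJ n x = ∑' m, sbTerm n x m := rfl

lemma main_aux (l : ℕ) (hl1 : 1 ≤ l)
    (k R ε : ℝ) (hk : 0 < k) (hR : 0 < R) (hε : 0 < ε) (hε' : ε < (Real.exp 1)⁻¹) :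
    ∃ N₀ : ℕ, ∀ n : ℕ, N₀ ≤ n →
      (1 - ε) ^ 2 * Real.exp (2 * (n : ℝ) + 1) * k ^ (2 * n) * R ^ (2 * n + l) /
          (2 * (2 * (n : ℝ) + 1) ^ (2 * n + 2) * (2 * n + l : ℝ)) ≤
        ∫ r in (0 : ℝ)..R, r ^ (l - 1) * sphericalBesselJ n (k * r) ^ 2 := by
  have hε1 : ε < 1 := by
    have h1e : (1 : ℝ) < Real.exp 1 := by
      have := Real.exp_one_gt_d9; linarith
    have : (Real.exp 1)⁻¹ < 1 := by
      rw [inv_lt_one_iff₀]; right; exact h1e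
    linarith
  have hε2 : 0 < 1 - ε := by linarith
  have hε3 : 0 < 1 - ε / 2 := by linarith
  set M := k * R with hM
  have hM0 : 0 < M := by positivity
  set δ : ℝ := min (1/2) (ε/4) with hδ
  have hδ0 : 0 < δ := by
    apply lt_min <;> linarith
  obtain ⟨N₁, hN₁⟩ := exists_nat_ge (M ^ 2 / (2 * δ))
  -- Stirling bound
  set c : ℝ := ((1 - ε / 2) / (1 - ε)) ^ 2 with hc
  have hc1 : 1 < c := by
    rw [hc]
    have h1 : 1 < (1 - ε / 2) / (1 - ε) := by
      rw [lt_div_iff₀ hε2]; linarith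
    nlinarith
  obtain ⟨N₂, hN₂⟩ := eventually_atTop.mp (sbQ_tendsto.eventually (eventually_le_nhds hc1))
  refine ⟨max N₁ N₂, fun n hn => ?_⟩
  have hnN₁ : N₁ ≤ n := le_trans (le_max_left _ _) hn
  have hnN₂ : N₂ ≤ n := le_trans (le_max_right _ _) hn
  have hd : (0 : ℝ) < ((2 * n + 1)‼ : ℝ) := by exact_mod_cast Nat.doubleFactorial_pos _
  set E : ℝ := Real.exp (2 * (n : ℝ) + 1) with hE
  have hE0 : 0 < E := Real.exp_pos _
  set D : ℝ := 2 * (2 * (n : ℝ) + 1) ^ (2 * n + 2) with hD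
  have hD0 : 0 < D := by positivity
  -- from the Stirling bound
  have hQ : sbQ n ≤ c := hN₂ n hnN₂
  have hkey : (1 - ε) ^ 2 * E / D ≤ (1 - ε / 2) ^ 2 / ((2 * n + 1)‼ : ℝ) ^ 2 := by
    rw [div_le_div_iff₀ hD0 (by positivity)]
    have h2 : ((2 * n + 1)‼ : ℝ) ^ 2 * E ≤ c * D := by
      rw [sbQ, ← hE, ← hD, div_le_iff₀ hD0] at hQ
      exact hQ
    have h3 := mul_le_mul_of_nonneg_left h2 (sq_nonneg (1 - ε))
    calc (1 - ε) ^ 2 * E * ((2 * n + 1)‼ : ℝ) ^ 2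
        = (1 - ε) ^ 2 * (((2 * n + 1)‼ : ℝ) ^ 2 * E) := by ring
      _ ≤ (1 - ε) ^ 2 * (c * D) := h3
      _ = (1 - ε / 2) ^ 2 * D := by
          rw [hc]; field_simp
  -- pointwise bound on [0, R]
  have hpt : ∀ r ∈ Set.Icc (0:ℝ) R,
      (1 - ε) ^ 2 * E * k ^ (2 * n) / D * r ^ (2 * n + (l - 1))
        ≤ r ^ (l - 1) * sphericalBesselJ n (k * r) ^ 2 := by
    intro r hr
    obtain ⟨hr0, hrR⟩ := hr
    have hkr : 0 ≤ k * r := by positivity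
    set y : ℝ := (k * r) ^ 2 / (2 * (2 * (n : ℝ) + 3)) with hy
    have hy0 : 0 ≤ y := by positivity
    have hyδ : y ≤ δ := by
      rw [hy]
      have hkrM : k * r ≤ M := by rw [hM]; exact mul_le_mul_of_nonneg_left hrR hk.le
      have h1 : (k * r) ^ 2 ≤ M ^ 2 := pow_le_pow_left₀ hkr hkrM 2
      have h2 : M ^ 2 ≤ 2 * δ * N₁ := by
        rw [div_le_iff₀ (by positivity)] at hN₁
        linarith
      have h3 : (N₁ : ℝ) ≤ n := by exact_mod_cast hnN₁
      rw [div_le_iff₀ (by positivity)]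
      nlinarith
    have hy12 : y ≤ 1 / 2 := le_trans hyδ (min_le_left _ _)
    have hjlow : (k * r) ^ n / ((2 * n + 1)‼ : ℝ) * (1 - 2 * y)
        ≤ sphericalBesselJ n (k * r) := by
      rw [sphericalBesselJ_eq_tsum]
      exact sb_lower n (k * r) hkr hy12
    have hj2 : (1 - ε / 2) * ((k * r) ^ n / ((2 * n + 1)‼ : ℝ))
        ≤ sphericalBesselJ n (k * r) := by
      refine le_trans ?_ hjlow
      have h1 : 1 - ε / 2 ≤ 1 - 2 * y := by
        have : y ≤ ε / 4 := le_trans hyδ (min_le_right _ _)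
        linarith
      have h2 : (0:ℝ) ≤ (k * r) ^ n / ((2 * n + 1)‼ : ℝ) := by positivity
      calc (1 - ε / 2) * ((k * r) ^ n / ((2 * n + 1)‼ : ℝ))
          = (k * r) ^ n / ((2 * n + 1)‼ : ℝ) * (1 - ε / 2) := by ring
        _ ≤ (k * r) ^ n / ((2 * n + 1)‼ : ℝ) * (1 - 2 * y) :=
            mul_le_mul_of_nonneg_left h1 h2
    have hjnn : 0 ≤ (1 - ε / 2) * ((k * r) ^ n / ((2 * n + 1)‼ : ℝ)) := by positivity
    have hsq : ((1 - ε / 2) * ((k * r) ^ n / ((2 * n + 1)‼ : ℝ))) ^ 2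
        ≤ sphericalBesselJ n (k * r) ^ 2 := pow_le_pow_left₀ hjnn hj2 2
    have hsq2 : (1 - ε) ^ 2 * E / D * (k * r) ^ (2 * n)
        ≤ ((1 - ε / 2) * ((k * r) ^ n / ((2 * n + 1)‼ : ℝ))) ^ 2 := by
      have expand : ((1 - ε / 2) * ((k * r) ^ n / ((2 * n + 1)‼ : ℝ))) ^ 2
          = (1 - ε / 2) ^ 2 / ((2 * n + 1)‼ : ℝ) ^ 2 * (k * r) ^ (2 * n) := by
        rw [mul_pow, div_pow, ← pow_mul]
        ring_nf
      rw [expand]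
      exact mul_le_mul_of_nonneg_right hkey (by positivity)
    have hchain : (1 - ε) ^ 2 * E / D * (k * r) ^ (2 * n) ≤ sphericalBesselJ n (k * r) ^ 2 :=
      le_trans hsq2 hsq
    have hfinal := mul_le_mul_of_nonneg_left hchain (pow_nonneg hr0 (l - 1))
    calc (1 - ε) ^ 2 * E * k ^ (2 * n) / D * r ^ (2 * n + (l - 1))
        = r ^ (l - 1) * ((1 - ε) ^ 2 * E / D * (k * r) ^ (2 * n)) := by
          rw [pow_add, mul_pow]
          ring
      _ ≤ r ^ (l - 1) * sphericalBesselJ n (k * r) ^ 2 := hfinal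
  -- integrability
  have hcont : ContinuousOn (fun r => r ^ (l - 1) * sphericalBesselJ n (k * r) ^ 2)
      (Set.Icc (0:ℝ) R) := by
    have h1 : ContinuousOn (fun r : ℝ => sphericalBesselJ n (k * r)) (Set.Icc (0:ℝ) R) :=
      sb_contOn n k R hk hR
    exact ((continuous_pow _).continuousOn).mul (h1.pow 2)
  have hint2 : IntervalIntegrable (fun r => r ^ (l - 1) * sphericalBesselJ n (k * r) ^ 2)
      MeasureTheory.volume 0 R := by
    apply ContinuousOn.intervalIntegrable
    rwa [Set.uIcc_of_le hR.le]
  have hint1 : IntervalIntegrable (fun r => (1 - ε) ^ 2 * E * k ^ (2 * n) / D * r ^ (2 * n + (l - 1)))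
      MeasureTheory.volume 0 R := by
    apply ContinuousOn.intervalIntegrable
    exact (continuous_const.mul (continuous_pow _)).continuousOn
  have hmono := intervalIntegral.integral_mono_on hR.le hint1 hint2 hpt
  have hval : ∫ r in (0:ℝ)..R, (1 - ε) ^ 2 * E * k ^ (2 * n) / D * r ^ (2 * n + (l - 1))
      = (1 - ε) ^ 2 * E * k ^ (2 * n) / D * (R ^ (2 * n + l) / (2 * (n:ℝ) + l)) := by
    rw [intervalIntegral.integral_const_mul, integral_pow]
    have hexp : 2 * n + (l - 1) + 1 = 2 * n + l := by omega
    rw [hexp]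
    have hzero : (0:ℝ) ^ (2 * n + l) = 0 := by
      apply zero_pow; omega
    rw [hzero]
    have hcast : ((2 * n + (l - 1) : ℕ) : ℝ) + 1 = 2 * (n:ℝ) + l := by
      have : (2 * n + (l - 1) : ℕ) = 2 * n + l - 1 := by omega
      rw [this]
      push_cast [Nat.cast_sub (by omega : 1 ≤ 2 * n + l)]
      ring
    rw [hcast]
    ring
  rw [hval] at hmono
  refine le_trans (le_of_eq ?_) hmono
  have h2nl : (0:ℝ) < 2 * (n:ℝ) + l := by
    have : (0:ℝ) ≤ (n:ℝ) := Nat.cast_nonneg n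
    have : (1:ℝ) ≤ (l:ℝ) := by exact_mod_cast hl1
    linarith
  field_simp

/-- Let `l ∈ {2, 3}`, `k > 0`, `R > 0` and `0 < ε < e⁻¹`.  Then there exists
`N₀ ∈ ℕ` (depending on `ε, R, k`) such that for all natural numbers `n ≥ N₀`,
`∫_0^R r^{l−1} · j_n(kr)² dr ≥ (1−ε)² · e^{2n+1} · k^{2n} · R^{2n+l} / (2 · (2n+1)^{2n+2} · (2n+l))`. -/
theorem integral_sphericalBesselJ_sq_lower_bound (l : ℕ) (hl : l = 2 ∨ l = 3)
    (k R ε : ℝ) (hk : 0 < k) (hR : 0 < R) (hε : 0 < ε) (hε' : ε < (Real.exp 1)⁻¹) :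
    ∃ N₀ : ℕ, ∀ n : ℕ, N₀ ≤ n →
      (1 - ε) ^ 2 * Real.exp (2 * (n : ℝ) + 1) * k ^ (2 * n) * R ^ (2 * n + l) /
          (2 * (2 * (n : ℝ) + 1) ^ (2 * n + 2) * (2 * n + l : ℝ)) ≤
        ∫ r in (0 : ℝ)..R, r ^ (l - 1) * sphericalBesselJ n (k * r) ^ 2 := by
  rcases hl with rfl | rfl
  · exact main_aux 2 (by norm_num) k R ε hk hR hε hε'
  · exact main_aux 3 (by norm_num) k R ε hk hR hε hε'
end
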